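/- arXiv:0801.0086 — 3 statements merged into one kernel-verified Lean document; each statement's English description precedes it below -/
import Mathlib

section
/- Every vertex [v] of Γ_E(R) is either an associated prime or adjacent to a vertex [z] where ann(z) is a maximal element of the family F = {ann(x) : 0 ≠ x ∈ R}. -/
open scoped Classical

noncomputable section

/-- The annihilator ideal of an element `x` of a commutative ring `R`. -/
def ann (R : Type*) [CommRing R] (x : R) : Ideal R := Ideal.torsionOf R R x

/-- The type of nonzero zero divisors of `R`. -/
def ZD (R : Type*) [CommRing R] : Type _ :=
  {x : R // x ≠ 0 ∧ ∃ y : R, y ≠ 0 ∧ x * y = 0}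

/-- Two zero divisors are equivalent iff they have the same annihilator. -/
instance annSetoid (R : Type*) [CommRing R] : Setoid (ZD R) :=
  ⟨fun a b => ann R a.1 = ann R b.1,
   fun _ => rfl, Eq.symm, Eq.trans⟩

/-- The vertex set of `Γ_E(R)`: equivalence classes of nonzero zero divisors. -/
def GammaEV (R : Type*) [CommRing R] : Type _ := Quotient (annSetoid R)

/-- The class of a nonzero zero divisor. -/
def cls (R : Type*) [CommRing R] (a : ZD R) : GammaEV R :=
  Quotient.mk (annSetoid R) a

/-- The graph `Γ_E(R)` of equivalence classes of zero divisors. -/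
def gammaE (R : Type*) [CommRing R] : SimpleGraph (GammaEV R) where
  Adj u v := u ≠ v ∧ ∃ a b : ZD R, cls R a = u ∧ cls R b = v ∧ a.1 * b.1 = 0
  symm := ⟨by
    rintro u v ⟨huv, a, b, ha, hb, hab⟩
    exact ⟨huv.symm, b, a, hb, ha, by rwa [mul_comm] at hab⟩⟩
  loopless := ⟨by rintro u ⟨h, -⟩; exact h rfl⟩

/-- `I` is a maximal element of the family `F = {ann x : 0 ≠ x ∈ R}`. -/
def MaxAnn (R : Type*) [CommRing R] (I : Ideal R) : Prop :=
  (∃ x : R, x ≠ 0 ∧ I = ann R x) ∧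
    ∀ y : R, y ≠ 0 → I ≤ ann R y → I = ann R y

lemma ann_mem {R : Type*} [CommRing R] {x r : R} : r ∈ ann R x ↔ r * x = 0 := by
  rw [ann, Ideal.mem_torsionOf_iff, smul_eq_mul]

lemma maxAnn_isPrime {R : Type*} [CommRing R] {I : Ideal R} (h : MaxAnn R I) : I.IsPrime := by
  obtain ⟨⟨x, hx, rfl⟩, hmax⟩ := h
  constructor
  · intro ht
    have : (1 : R) ∈ ann R x := ht ▸ Submodule.mem_top
    rw [ann_mem, one_mul] at this
    exact hx this
  · intro a b hab
    by_contra hc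
    push_neg at hc
    obtain ⟨ha, hb⟩ := hc
    have hbx : b * x ≠ 0 := fun h => hb (ann_mem.mpr h)
    have hle : ann R x ≤ ann R (b * x) := by
      intro r hr
      rw [ann_mem] at hr ⊢
      rw [mul_comm b x, ← mul_assoc, hr, zero_mul]
    have heq := hmax _ hbx hle
    apply ha
    rw [heq, ann_mem, ← mul_assoc]
    exact ann_mem.mp hab

theorem stmt2 (R : Type*) [CommRing R] [IsNoetherianRing R] (v : ZD R) :
    (ann R v.1).IsPrime ∨
      ∃ z : ZD R, MaxAnn R (ann R z.1) ∧ (gammaE R).Adj (cls R v) (cls R z) := by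
  obtain ⟨hv0, y, hy0, hvy⟩ := v.2
  set S : Set (Ideal R) := {I | ∃ x : R, x ≠ 0 ∧ ann R y ≤ ann R x ∧ I = ann R x} with hS
  have hSne : S.Nonempty := ⟨ann R y, y, hy0, le_rfl, rfl⟩
  obtain ⟨I, hIS, hImax⟩ :=
    (set_has_maximal_iff_noetherian.mpr (inferInstance : IsNoetherianRing R)) S hSne
  obtain ⟨z, hz0, hyz, rfl⟩ := hIS
  have hmax : MaxAnn R (ann R z) := by
    refine ⟨⟨z, hz0, rfl⟩, fun w hw0 hle => ?_⟩
    have hwS : ann R w ∈ S := ⟨w, hw0, le_trans hyz hle, rfl⟩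
    exact eq_of_le_of_not_lt hle (hImax _ hwS)
  have hvz : v.1 * z = 0 := ann_mem.mp (hyz (ann_mem.mpr hvy))
  by_cases heq : ann R v.1 = ann R z
  · left
    exact heq ▸ maxAnn_isPrime hmax
  · right
    have hzZD : z ≠ 0 ∧ ∃ y' : R, y' ≠ 0 ∧ z * y' = 0 :=
      ⟨hz0, v.1, hv0, by rwa [mul_comm]⟩
    refine ⟨⟨z, hzZD⟩, hmax, ?_, v, ⟨z, hzZD⟩, rfl, rfl, hvz⟩
    intro hc
    exact heq (Quotient.exact hc)
end
end

section
/- If x and y are zero divisors of R with 0 ≠ ann(x) ⊊ ann(y), then deg[x] ≤ deg[y] in Γ_E(R). -/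
open scoped Classical

noncomputable section

theorem stmt9 (R : Type*) [CommRing R] [IsNoetherianRing R] (a b : ZD R)
    (h0 : ann R a.1 ≠ ⊥) (h : ann R a.1 < ann R b.1) :
    ((gammaE R).neighborSet (cls R a)).encard ≤
      ((gammaE R).neighborSet (cls R b)).encard := by
  have hne : cls R a ≠ cls R b := by
    intro hc
    exact h.ne (Quotient.exact hc)
  apply Set.encard_le_encard_of_injOn
    (f := fun v => if v = cls R b then cls R a else v)
  · intro v hv
    by_cases hvb : v = cls R b
    · simp only [hvb, if_pos rfl]
      subst hvb
      exact (gammaE R).mem_neighborSet _ _ |>.2 (((gammaE R).adj_symm hv))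
    · simp only [if_neg hvb]
      obtain ⟨hav, p, q, hp, hq, hpq⟩ := hv
      have hqa : q.1 ∈ ann R a.1 := by
        have : ann R p.1 = ann R a.1 := Quotient.exact hp
        rw [← this]
        simpa [ann, Ideal.mem_torsionOf_iff, mul_comm] using hpq
      have hqb : b.1 * q.1 = 0 := by
        have := h.le hqa
        simpa [ann, Ideal.mem_torsionOf_iff, mul_comm] using this
      exact ⟨hvb ∘ Eq.symm, b, q, rfl, hq, hqb⟩
  · intro u hu v hv huv
    by_cases hub : u = cls R b <;> by_cases hvb : v = cls R b
    · rw [hub, hvb]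
    · simp only [if_pos hub, if_neg hvb] at huv
      exact absurd huv.symm ((gammaE R).ne_of_adj hv).symm
    · simp only [if_neg hub, if_pos hvb] at huv
      exact absurd huv ((gammaE R).ne_of_adj hu).symm
    · simpa [if_neg hub, if_neg hvb] using huv
end
end

section
/- The vertex set of Γ_E(R) is infinite if and only if there is an associated prime ann(x) maximal in F = {ann(z) : 0 ≠ z ∈ R} such that the vertex [x] has infinite degree in Γ_E(R). -/
open scoped Classical

noncomputable section

lemma mem_ann_iff {R : Type*} [CommRing R] {x a : R} : a ∈ ann R x ↔ a * x = 0 := by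
  simp [ann, Ideal.mem_torsionOf_iff, smul_eq_mul]

lemma ann_le_ann_mul {R : Type*} [CommRing R] (x y : R) : ann R x ≤ ann R (x * y) := by
  intro a ha
  rw [mem_ann_iff] at ha ⊢
  rw [show a * (x * y) = a * x * y by ring, ha, zero_mul]

/-- Every annihilator of a nonzero element extends to a maximal annihilator. -/
lemma exists_maxAnn_above {R : Type*} [CommRing R] [IsNoetherianRing R] {x : R} (hx : x ≠ 0) :
    ∃ I : Ideal R, MaxAnn R I ∧ ann R x ≤ I := by
  have hmax := set_has_maximal_iff_noetherian.mpr (inferInstance : IsNoetherian R R)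
  obtain ⟨I, ⟨⟨y, hy0, rfl, hle⟩, hI⟩⟩ :=
    hmax {J | ∃ y : R, y ≠ 0 ∧ J = ann R y ∧ ann R x ≤ J} ⟨ann R x, x, hx, rfl, le_rfl⟩
  refine ⟨ann R y, ⟨⟨y, hy0, rfl⟩, ?_⟩, hle⟩
  intro z hz0 hlez
  rcases lt_or_eq_of_le hlez with h | h
  · exact absurd h (hI _ ⟨z, hz0, rfl, le_trans hle hlez⟩)
  · exact h

/-- Two distinct maximal annihilators annihilate each other. -/
lemma maxAnn_mul_eq_zero {R : Type*} [CommRing R] {x y : R} (_hx : x ≠ 0) (_hy : y ≠ 0)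
    (hX : MaxAnn R (ann R x)) (hY : MaxAnn R (ann R y)) (hne : ann R x ≠ ann R y) :
    x * y = 0 := by
  by_contra hxy
  have h1 : ann R x = ann R (x * y) := hX.2 _ hxy (ann_le_ann_mul x y)
  have h2 : ann R y = ann R (x * y) := by
    rw [mul_comm] at hxy ⊢
    exact hY.2 _ hxy (ann_le_ann_mul y x)
  exact hne (h1.trans h2.symm)

theorem stmt10 (R : Type*) [CommRing R] [IsNoetherianRing R] :
    Infinite (GammaEV R) ↔
      ∃ a : ZD R, (ann R a.1).IsPrime ∧ MaxAnn R (ann R a.1) ∧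
        ((gammaE R).neighborSet (cls R a)).Infinite := by
  constructor
  · intro hinf
    -- every class maps to a maximal annihilator containing its chosen representative
    have key : ∀ v : GammaEV R, ∃ I : Ideal R, MaxAnn R I ∧ (v.out : ZD R).1 ∈ I := by
      intro v
      obtain ⟨hz0, w, hw0, hw⟩ := (v.out : ZD R).2
      obtain ⟨I, hI, hle⟩ := exists_maxAnn_above (R := R) hw0
      exact ⟨I, hI, hle (mem_ann_iff.mpr hw)⟩
    set M : Set (Ideal R) := {I | MaxAnn R I} with hM
    rcases Set.finite_or_infinite M with hMfin | hMinf
    · -- finitely many maximal annihilators: pigeonhole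
      haveI : Finite ↥M := hMfin.to_subtype
      let f : GammaEV R → ↥M := fun v => ⟨(key v).choose, (key v).choose_spec.1⟩
      obtain ⟨⟨p, hp⟩, hfib⟩ := Finite.exists_infinite_fiber f
      have hfib' : (f ⁻¹' {⟨p, hp⟩}).Infinite := Set.infinite_coe_iff.mp hfib
      obtain ⟨x, hx0, hpx⟩ := hp.1
      -- every class in the fiber has its representative in p = ann x
      have hmem : ∀ v ∈ f ⁻¹' {⟨p, hp⟩}, x * (v.out : ZD R).1 = 0 := by
        intro v hv
        have : (v.out : ZD R).1 ∈ p := by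
          have := (key v).choose_spec.2
          have hvp : (key v).choose = p := congrArg Subtype.val hv
          rwa [hvp] at this
        rw [hpx, mem_ann_iff] at this
        rw [mul_comm]; exact this
      obtain ⟨v₀, hv₀⟩ := hfib'.nonempty
      have hxzd : x ≠ 0 ∧ ∃ y : R, y ≠ 0 ∧ x * y = 0 :=
        ⟨hx0, (v₀.out : ZD R).1, (v₀.out : ZD R).2.1, hmem v₀ hv₀⟩
      refine ⟨⟨x, hxzd⟩, ?_, ?_, ?_⟩
      · exact hpx ▸ maxAnn_isPrime (hpx ▸ hp)
      · exact hpx ▸ hp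
      · refine Set.Infinite.mono ?_ (hfib'.diff (Set.finite_singleton (cls R ⟨x, hxzd⟩)))
        rintro v ⟨hv, hvne⟩
        refine ⟨Ne.symm hvne, ⟨x, hxzd⟩, v.out, rfl, ?_, hmem v hv⟩
        exact Quotient.out_eq v
    · -- infinitely many maximal annihilators: they pairwise annihilate
      obtain ⟨p₀, hp₀⟩ := hMinf.nonempty
      obtain ⟨x₀, hx₀0, hpx₀⟩ := hp₀.1
      have hMd : (M \ {p₀}).Infinite := hMinf.diff (Set.finite_singleton p₀)
      haveI : Infinite ↥(M \ {p₀}) := hMd.to_subtype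
      -- representative of each other maximal annihilator
      have hrep : ∀ q : ↥(M \ {p₀}), ∃ y : R, y ≠ 0 ∧ (q : Ideal R) = ann R y := fun q =>
        q.2.1.1
      have hmul : ∀ q : ↥(M \ {p₀}), x₀ * (hrep q).choose = 0 := by
        intro q
        obtain ⟨hy0, hqy⟩ := (hrep q).choose_spec
        refine maxAnn_mul_eq_zero hx₀0 hy0 (hpx₀ ▸ hp₀) (hqy ▸ q.2.1) ?_
        rw [← hpx₀, ← hqy]
        exact fun h => q.2.2 (h ▸ rfl)
      have hx₀zd : x₀ ≠ 0 ∧ ∃ y : R, y ≠ 0 ∧ x₀ * y = 0 := by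
        obtain ⟨q⟩ := (inferInstance : Nonempty ↥(M \ {p₀}))
        exact ⟨hx₀0, (hrep q).choose, (hrep q).choose_spec.1, hmul q⟩
      have hyzd : ∀ q : ↥(M \ {p₀}),
          (hrep q).choose ≠ 0 ∧ ∃ y : R, y ≠ 0 ∧ (hrep q).choose * y = 0 :=
        fun q => ⟨(hrep q).choose_spec.1, x₀, hx₀0, by rw [mul_comm]; exact hmul q⟩
      refine ⟨⟨x₀, hx₀zd⟩, hpx₀ ▸ maxAnn_isPrime (hpx₀ ▸ hp₀), hpx₀ ▸ hp₀, ?_⟩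
      have hanne : ∀ q : ↥(M \ {p₀}), ann R x₀ ≠ ann R (hrep q).choose := by
        intro q h
        exact q.2.2 (show (q : Ideal R) = p₀ by rw [(hrep q).choose_spec.2, ← h, ← hpx₀])
      refine Set.infinite_of_injective_forall_mem
        (f := fun q : ↥(M \ {p₀}) => cls R ⟨(hrep q).choose, hyzd q⟩) ?_ ?_
      · intro q q' h
        have : ann R (hrep q).choose = ann R (hrep q').choose := Quotient.exact h
        apply Subtype.ext
        rw [(hrep q).choose_spec.2, (hrep q').choose_spec.2, this]
      · intro q
        refine ⟨?_, ⟨x₀, hx₀zd⟩, ⟨(hrep q).choose, hyzd q⟩, rfl, rfl, hmul q⟩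
        intro h
        exact hanne q (Quotient.exact h)
  · rintro ⟨a, -, -, hinf⟩
    haveI : Infinite ↥((gammaE R).neighborSet (cls R a)) := hinf.to_subtype
    exact Infinite.of_injective
      (Subtype.val : ↥((gammaE R).neighborSet (cls R a)) → GammaEV R) Subtype.val_injective
end
end
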